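/- For every positive integer t there exist constants α, β, γ > 0 such that the following holds: for all positive integers s and n ≥ 2, if G is a semilinear graph of complexity t on n vertices that contains no clique of size s, then the chromatic number of G satisfies χ(G) ≤ α·s^β·(log n)^γ. -/

import Mathlib

/-- `f : ℝ^d × ℝ^d → ℝ` is linear (affine). -/
def IsLinearPair {d : ℕ} (f : (Fin d → ℝ) → (Fin d → ℝ) → ℝ) : Prop :=
  ∃ (a b : Fin d → ℝ) (c : ℝ), ∀ x y, f x y = c + (∑ i, a i * x i) + (∑ i, b i * y i)

/-- `G` is a semilinear graph of complexity `t`. -/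
def IsSemilinear {V : Type} (G : SimpleGraph V) (t : ℕ) : Prop :=
  ∃ d : ℕ, 0 < d ∧
    ∃ v : V → Fin d → ℝ, Function.Injective v ∧
      ∃ f : Fin t → (Fin d → ℝ) → (Fin d → ℝ) → ℝ,
        (∀ i, IsLinearPair (f i)) ∧
        ∃ φ : (Fin t → Prop × Prop × Prop) → Prop,
          ∀ x y : V, x ≠ y →
            (G.Adj x y ↔
              φ (fun i => (f i (v x) (v y) < 0, f i (v x) (v y) ≤ 0, f i (v x) (v y) = 0)))

namespace SemiLinAux

instance : Fintype Ordering :=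
  ⟨⟨{Ordering.lt, Ordering.eq, Ordering.gt}, by decide⟩, fun x => by cases x <;> decide⟩

lemma card_ordering : Fintype.card Ordering = 3 := rfl


/-! ### Packing lemma -/

lemma pack_inj {B a b a' b' : ℕ} (hb : b < B) (hb' : b' < B)
    (h : a * B + b = a' * B + b') : a = a' ∧ b = b' := by
  have hB : 0 < B := lt_of_le_of_lt (Nat.zero_le _) hb
  have e1 : (B * a + b) / B = a + b / B := Nat.mul_add_div hB a b
  have e2 : (B * a' + b') / B = a' + b' / B := Nat.mul_add_div hB a' b'
  have hb0 : b / B = 0 := Nat.div_eq_of_lt hb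
  have hb0' : b' / B = 0 := Nat.div_eq_of_lt hb'
  have h' : B * a + b = B * a' + b' := by rw [mul_comm B a, mul_comm B a']; exact h
  have ha : a = a' := by
    have := congrArg (· / B) h'
    rw [e1, e2, hb0, hb0'] at this
    omega
  subst ha
  exact ⟨rfl, by omega⟩

/-! ### Dyadic node machinery -/

/-- The level at which a dyadic interval first separates `lo` from `hi`. -/
def nodeJ (Λ lo hi : ℕ) : ℕ := Nat.findGreatest (fun j => lo / 2^j ≠ hi / 2^j) Λ

/-- The index of the dyadic node of `(lo, hi)`. -/
def nodeP (Λ lo hi : ℕ) : ℕ := lo / 2^(nodeJ Λ lo hi + 1)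

lemma node_spec {Λ lo hi : ℕ} (h : lo < hi) (hhi : hi < 2^Λ) :
    nodeJ Λ lo hi < Λ ∧
    lo / 2^(nodeJ Λ lo hi + 1) = nodeP Λ lo hi ∧
    hi / 2^(nodeJ Λ lo hi + 1) = nodeP Λ lo hi ∧
    lo / 2^(nodeJ Λ lo hi) = 2 * nodeP Λ lo hi ∧
    hi / 2^(nodeJ Λ lo hi) = 2 * nodeP Λ lo hi + 1 := by
  classical
  set j := nodeJ Λ lo hi with hj
  have hP0 : lo / 2^0 ≠ hi / 2^0 := by simpa using h.ne
  have hPj : lo / 2^j ≠ hi / 2^j := by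
    have := Nat.findGreatest_spec (P := fun jj => lo / 2^jj ≠ hi / 2^jj) (Nat.zero_le Λ) hP0
    exact this
  have hjle : j ≤ Λ := Nat.findGreatest_le Λ
  have hΛeq : lo / 2^Λ = hi / 2^Λ := by
    rw [Nat.div_eq_of_lt (lt_trans h hhi), Nat.div_eq_of_lt hhi]
  have hjlt : j < Λ := by
    rcases lt_or_eq_of_le hjle with h' | h'
    · exact h'
    · exact absurd (h' ▸ hPj) (by simp [hΛeq])
  have hfg : Nat.findGreatest (fun jj => lo / 2^jj ≠ hi / 2^jj) Λ = j := hj.symm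
  have hsucc : lo / 2^(j+1) = hi / 2^(j+1) := by
    by_contra hne
    exact Nat.findGreatest_is_greatest (P := fun jj => lo / 2^jj ≠ hi / 2^jj)
      (by rw [hfg]; omega) (by omega) hne
  have e1 : (lo / 2^j) / 2 = lo / 2^(j+1) := by
    rw [Nat.div_div_eq_div_mul, pow_succ]
  have e2 : (hi / 2^j) / 2 = hi / 2^(j+1) := by
    rw [Nat.div_div_eq_div_mul, pow_succ]
  have hle : lo / 2^j ≤ hi / 2^j := Nat.div_le_div_right h.le
  have hpdef : nodeP Λ lo hi = lo / 2^(j+1) := rfl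
  refine ⟨hjlt, rfl, by omega, by omega, by omega⟩

/-- Same node: the low end of one pair is below the high end of the other. -/
lemma node_lt_of_eq {Λ lo1 hi1 lo2 hi2 : ℕ} (h1 : lo1 < hi1) (hh1 : hi1 < 2^Λ)
    (h2 : lo2 < hi2) (hh2 : hi2 < 2^Λ)
    (hj : nodeJ Λ lo1 hi1 = nodeJ Λ lo2 hi2) (hp : nodeP Λ lo1 hi1 = nodeP Λ lo2 hi2) :
    lo1 < hi2 := by
  obtain ⟨-, -, -, e1, -⟩ := node_spec h1 hh1
  obtain ⟨-, -, -, -, e2⟩ := node_spec h2 hh2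
  by_contra hcon
  push_neg at hcon
  have := Nat.div_le_div_right (c := 2^(nodeJ Λ lo1 hi1)) hcon
  rw [e1, hj, e2, ← hp] at this
  omega

/-- Separated nodes at the same level are totally ordered. -/
lemma node_sep {Λ lo1 hi1 lo2 hi2 : ℕ} (h1 : lo1 < hi1) (hh1 : hi1 < 2^Λ)
    (h2 : lo2 < hi2) (hh2 : hi2 < 2^Λ)
    (hj : nodeJ Λ lo1 hi1 = nodeJ Λ lo2 hi2) (hp : nodeP Λ lo1 hi1 < nodeP Λ lo2 hi2) :
    hi1 < lo2 := by
  obtain ⟨-, -, e1, -, -⟩ := node_spec h1 hh1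
  obtain ⟨-, e2, -, -, -⟩ := node_spec h2 hh2
  by_contra hcon
  push_neg at hcon
  have := Nat.div_le_div_right (c := 2^(nodeJ Λ lo1 hi1 + 1)) hcon
  rw [e1, hj, e2] at this
  omega

/-! ### The bound -/

def Bnd (s Λ : ℕ) : ℕ → ℕ
  | 0 => s
  | k+1 => 3 * Λ^2 * (Bnd s Λ k)^2

lemma Bnd_pos {s Λ : ℕ} (hs : 0 < s) (hΛ : 0 < Λ) : ∀ k, 0 < Bnd s Λ k
  | 0 => hs
  | k+1 => by
      have := Bnd_pos hs hΛ k
      simp only [Bnd]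
      positivity


/-! ### Comparison relations -/

def cmpRel : Ordering → ℝ → ℝ → Prop
  | Ordering.lt => fun a b => a < b
  | Ordering.eq => fun a b => a = b
  | Ordering.gt => fun a b => b < a

variable {V : Type}

def Rel {k l : ℕ} (U W : Fin k → V → ℝ) (o : Fin k → Ordering) (ν : Fin l → V → ℝ)
    (x y : V) : Prop :=
  (∀ i, cmpRel (o i) (U i x) (W i y)) ∧ (∀ i, ν i x < ν i y)

lemma Rel_succ {k l : ℕ} (U W : Fin (k+1) → V → ℝ) (o : Fin (k+1) → Ordering)
    (ν : Fin l → V → ℝ) (x y : V) :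
    Rel U W o ν x y ↔ cmpRel (o 0) (U 0 x) (W 0 y) ∧
      Rel (fun i => U i.succ) (fun i => W i.succ) (fun i => o i.succ) ν x y := by
  unfold Rel
  rw [Fin.forall_fin_succ]
  tauto

lemma Rel_cons {k l : ℕ} (U W : Fin k → V → ℝ) (o : Fin k → Ordering)
    (ν0 : V → ℝ) (ν : Fin l → V → ℝ) (x y : V) :
    Rel U W o (Fin.cons ν0 ν) x y ↔ ν0 x < ν0 y ∧ Rel U W o ν x y := by
  unfold Rel
  rw [Fin.forall_fin_succ (P := fun i => Fin.cons (α := fun _ => V → ℝ) ν0 ν i x < Fin.cons (α := fun _ => V → ℝ) ν0 ν i y)]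
  simp only [Fin.cons_zero, Fin.cons_succ]
  tauto

/-! ### Cliques -/

lemma clique_card_lt {V : Type} {G : SimpleGraph V} {s : ℕ} (hfree : G.CliqueFree s)
    (C : Finset V) (hC : G.IsClique ↑C) : C.card < s := by
  by_contra h
  push_neg at h
  obtain ⟨D, hD, hcard⟩ := Finset.exists_subset_card_eq h
  exact hfree D ⟨hC.subset (Finset.coe_subset.2 hD), hcard⟩

/-! ### Mirsky-type coloring for comparability graphs -/

lemma mirsky {V : Type} [Fintype V] (G : SimpleGraph V) (s : ℕ) (A : Finset V)
    (r : V → V → Prop) (htrans : ∀ {x y z}, r x y → r y z → r x z) (hirr : ∀ x, ¬ r x x)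
    (hadj : ∀ x ∈ A, ∀ y ∈ A, x ≠ y → (G.Adj x y ↔ r x y ∨ r y x))
    (hfree : G.CliqueFree s) :
    ∃ col : V → ℕ, (∀ x ∈ A, ∀ y ∈ A, G.Adj x y → col x ≠ col y) ∧ ∀ x ∈ A, col x < s := by
  classical
  set r' : V → V → Prop := fun y x => y ∈ A ∧ x ∈ A ∧ r y x with hr'
  haveI : IsTrans V r' := ⟨fun a b c hab hbc => ⟨hab.1, hbc.2.1, htrans hab.2.2 hbc.2.2⟩⟩
  haveI : IsIrrefl V r' := ⟨fun a ha => hirr a ha.2.2⟩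
  have hwf : WellFounded r' := Finite.wellFounded_of_trans_of_irrefl r'
  set F : (x : V) → ((y : V) → r' y x → ℕ) → ℕ := fun x ih =>
    (Finset.univ.filter (fun y => r' y x)).attach.sup
      (fun y => ih y.1 (Finset.mem_filter.1 y.2).2 + 1) with hF
  set ht : V → ℕ := hwf.fix F with hht
  have htunf : ∀ x, ht x = (Finset.univ.filter (fun y => r' y x)).attach.sup
      (fun y => ht y.1 + 1) := by
    intro x
    rw [hht, WellFounded.fix_eq]
  have hdesc : ∀ {y x}, r' y x → ht y < ht x := by
    intro y x hyx
    have hmem : y ∈ Finset.univ.filter (fun z => r' z x) :=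
      Finset.mem_filter.2 ⟨Finset.mem_univ _, hyx⟩
    have hle := Finset.le_sup (s := (Finset.univ.filter (fun z => r' z x)).attach)
      (f := fun z => ht z.1 + 1) (Finset.mem_attach _ ⟨y, hmem⟩)
    simp only at hle
    rw [← htunf] at hle
    omega
  have hchain : ∀ x, x ∈ A → ∃ C : Finset V, x ∈ C ∧ C.card = ht x + 1 ∧
      (∀ z ∈ C, z = x ∨ r' z x) ∧ G.IsClique ↑C := by
    intro x
    induction x using hwf.induction with
    | _ x IH =>
      intro hxA
      by_cases hne : (Finset.univ.filter (fun y => r' y x)).Nonempty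
      · obtain ⟨y, hy, hsup⟩ := Finset.exists_mem_eq_sup
          ((Finset.univ.filter (fun y => r' y x)).attach)
          (hne.attach) (fun z => ht z.1 + 1)
        have hyx : r' y.1 x := (Finset.mem_filter.1 y.2).2
        obtain ⟨Cy, hyC, hCcard, hCbelow, hCclique⟩ := IH y.1 hyx hyx.1
        have hxC : x ∉ Cy := by
          intro hx
          rcases hCbelow x hx with h | h
          · rw [← h] at hyx
            exact hirr x hyx.2.2
          · exact hirr x (htrans h.2.2 hyx.2.2)
        refine ⟨insert x Cy, Finset.mem_insert_self _ _, ?_, ?_, ?_⟩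
        · rw [Finset.card_insert_of_notMem hxC, hCcard]
          have : ht x = ht y.1 + 1 := by rw [htunf x, hsup]
          omega
        · intro z hz
          rcases Finset.mem_insert.1 hz with h | h
          · exact Or.inl h
          · rcases hCbelow z h with h' | h'
            · refine Or.inr ?_
              rw [h']
              exact hyx
            · exact Or.inr ⟨h'.1, hxA, htrans h'.2.2 hyx.2.2⟩
        · rw [Finset.coe_insert]
          refine hCclique.insert ?_
          intro z hz hxz
          have hz' : r' z x := by
            rcases hCbelow z hz with h' | h'
            · rw [h']
              exact hyx
            · exact ⟨h'.1, hxA, htrans h'.2.2 hyx.2.2⟩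
          exact (hadj x hxA z hz'.1 hxz).2 (Or.inr hz'.2.2)
      · refine ⟨{x}, Finset.mem_singleton_self x, ?_, ?_, ?_⟩
        · rw [Finset.card_singleton, htunf x]
          rw [Finset.not_nonempty_iff_eq_empty.1 hne]
          simp
        · intro z hz
          exact Or.inl (Finset.mem_singleton.1 hz)
        · simp [SimpleGraph.isClique_singleton]
  refine ⟨ht, ?_, ?_⟩
  · intro x hx y hy hadjxy
    rcases (hadj x hx y hy hadjxy.ne).1 hadjxy with h | h
    · exact (hdesc ⟨hx, hy, h⟩).ne
    · exact (hdesc ⟨hy, hx, h⟩).ne'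
  · intro x hx
    obtain ⟨C, hxC, hCcard, -, hCclique⟩ := hchain x hx
    have := clique_card_lt hfree C hCclique
    omega


lemma le_sq_mul {x y : ℕ} (hx : 0 < x) (hy : 0 < y) : x ≤ x^2 * y^2 := by
  have h1 : x*1 ≤ x*x := Nat.mul_le_mul_left x hx
  have h2 : (x*x) * 1 ≤ (x*x) * (y*y) := Nat.mul_le_mul_left _ (Nat.mul_pos hy hy)
  calc x = x*1 := (Nat.mul_one x).symm
  _ ≤ x*x := h1
  _ = x*x*1 := (Nat.mul_one _).symm
  _ ≤ x*x*(y*y) := h2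
  _ = x^2*y^2 := by ring

/-! ### The core statement -/

def CoreStmt (s Λ k : ℕ) : Prop :=
  ∀ (V : Type) [Fintype V] (G : SimpleGraph V) (l : ℕ)
    (U W : Fin k → V → ℝ) (o : Fin k → Ordering) (ν : Fin l → V → ℝ)
    (A : Finset V), 2 * A.card < 2 ^ Λ →
    (∀ x ∈ A, ∀ y ∈ A, x ≠ y → (G.Adj x y ↔ Rel U W o ν x y ∨ Rel U W o ν y x)) →
    G.CliqueFree s →
    ∃ col : V → ℕ, (∀ x ∈ A, ∀ y ∈ A, G.Adj x y → col x ≠ col y) ∧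
      ∀ x ∈ A, col x < Bnd s Λ k

lemma core_zero (s Λ : ℕ) (hs : 0 < s) : CoreStmt s Λ 0 := by
  intro V _ G l U W o ν A hA hex hfree
  classical
  rcases Nat.eq_zero_or_pos l with hl | hl
  · subst hl
    have hclique : G.IsClique ↑A := by
      intro x hx y hy hxy
      exact (hex x hx y hy hxy).2 (Or.inl ⟨fun i => i.elim0, fun i => i.elim0⟩)
    have hcard : A.card < s := clique_card_lt hfree A hclique
    refine ⟨fun x => if h : x ∈ A then (A.equivFin ⟨x, h⟩ : ℕ) else 0, ?_, ?_⟩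
    · intro x hx y hy hadj
      simp only [dif_pos hx, dif_pos hy]
      intro he
      have h2 : A.equivFin ⟨x, hx⟩ = A.equivFin ⟨y, hy⟩ := Fin.val_injective he
      have h3 := A.equivFin.injective h2
      exact hadj.ne (congrArg Subtype.val h3)
    · intro x hx
      simp only [dif_pos hx, Bnd]
      exact lt_of_lt_of_le (A.equivFin ⟨x, hx⟩).2 (le_of_lt hcard)
  · have hadj : ∀ x ∈ A, ∀ y ∈ A, x ≠ y →
        (G.Adj x y ↔ (∀ i, ν i x < ν i y) ∨ (∀ i, ν i y < ν i x)) := by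
      intro x hx y hy hxy
      rw [hex x hx y hy hxy]
      unfold Rel
      constructor
      · rintro (⟨-, h⟩ | ⟨-, h⟩)
        · exact Or.inl h
        · exact Or.inr h
      · rintro (h | h)
        · exact Or.inl ⟨fun i => i.elim0, h⟩
        · exact Or.inr ⟨fun i => i.elim0, h⟩
    obtain ⟨col, h1, h2⟩ := mirsky G s A (fun x y => ∀ i, ν i x < ν i y)
      (fun hxy hyz i => lt_trans (hxy i) (hyz i))
      (fun x hx => lt_irrefl _ (hx ⟨0, hl⟩)) hadj hfree
    exact ⟨col, h1, fun x hx => by simpa [Bnd] using h2 x hx⟩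


/-! ### Step: equality comparison -/

lemma step_eq (s Λ k : ℕ) (hs : 0 < s) (IH : CoreStmt s Λ k)
    (V : Type) [Fintype V] (G : SimpleGraph V) (l : ℕ)
    (U0 W0 : V → ℝ) (U W : Fin k → V → ℝ) (o : Fin k → Ordering) (ν : Fin l → V → ℝ)
    (A : Finset V) (hA : 2 * A.card < 2 ^ Λ)
    (hex : ∀ x ∈ A, ∀ y ∈ A, x ≠ y →
      (G.Adj x y ↔ (U0 x = W0 y ∧ Rel U W o ν x y) ∨ (U0 y = W0 x ∧ Rel U W o ν y x)))
    (hfree : G.CliqueFree s) :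
    ∃ col : V → ℕ, (∀ x ∈ A, ∀ y ∈ A, G.Adj x y → col x ≠ col y) ∧
      ∀ x ∈ A, col x < 3 * Λ^2 * (Bnd s Λ k)^2 := by
  classical
  rcases Finset.eq_empty_or_nonempty A with hAe | hAne
  · exact ⟨fun _ => 0, by simp [hAe], by simp [hAe]⟩
  have hΛpos : 0 < Λ := by
    rcases hAne with ⟨x0, hx0⟩
    have h1 : 1 ≤ A.card := Finset.card_pos.2 ⟨x0, hx0⟩
    by_contra hcon
    push_neg at hcon
    have hcon' : Λ = 0 := by omega
    rw [hcon', pow_zero] at hA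
    omega
  have hBk : 0 < Bnd s Λ k := Bnd_pos hs hΛpos k
  set E : Finset ℝ := A.image U0 ∪ A.image W0 with hE
  set rk : ℝ → ℕ := fun r => ((E.filter (fun e => e < r)).card) with hrk
  have hEcard : E.card < 2 ^ Λ := by
    have h1 : E.card ≤ (A.image U0).card + (A.image W0).card := by
      rw [hE]
      exact Finset.card_union_le _ _
    have h2 := Finset.card_image_le (s := A) (f := U0)
    have h3 := Finset.card_image_le (s := A) (f := W0)
    omega
  have rk_lt : ∀ r, rk r < 2 ^ Λ := fun r =>
    lt_of_le_of_lt (Finset.card_le_card (Finset.filter_subset _ _)) hEcard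
  have rk_mono : ∀ {r1 r2 : ℝ}, r1 ≤ r2 → rk r1 ≤ rk r2 := by
    intro r1 r2 h
    apply Finset.card_le_card
    intro e he
    rw [Finset.mem_filter] at he ⊢
    exact ⟨he.1, lt_of_lt_of_le he.2 h⟩
  have rk_strict : ∀ {r1 r2 : ℝ}, r1 ∈ E → r1 < r2 → rk r1 < rk r2 := by
    intro r1 r2 h1 h
    apply Finset.card_lt_card
    constructor
    · intro e he
      rw [Finset.mem_filter] at he ⊢
      exact ⟨he.1, lt_trans he.2 h⟩
    · intro hsub
      have h2 : r1 ∈ E.filter (fun e => e < r2) := Finset.mem_filter.2 ⟨h1, h⟩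
      have h3 := hsub h2
      rw [Finset.mem_filter] at h3
      exact lt_irrefl _ h3.2
  have rk_lt_iff : ∀ {r1 r2 : ℝ}, r1 ∈ E → r2 ∈ E → (rk r1 < rk r2 ↔ r1 < r2) := by
    intro r1 r2 h1 h2
    constructor
    · intro h
      by_contra hcon
      push_neg at hcon
      exact absurd (rk_mono hcon) (by omega)
    · exact rk_strict h1
  have rk_eq_iff : ∀ {r1 r2 : ℝ}, r1 ∈ E → r2 ∈ E → (rk r1 = rk r2 ↔ r1 = r2) := by
    intro r1 r2 h1 h2
    constructor
    · intro h
      rcases lt_trichotomy r1 r2 with h' | h' | h'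
      · exact absurd (rk_strict h1 h') (by omega)
      · exact h'
      · exact absurd (rk_strict h2 h') (by omega)
    · intro h
      rw [h]
  have hUE : ∀ x ∈ A, U0 x ∈ E := fun x hx =>
    Finset.mem_union_left _ (Finset.mem_image_of_mem _ hx)
  have hWE : ∀ x ∈ A, W0 x ∈ E := fun x hx =>
    Finset.mem_union_right _ (Finset.mem_image_of_mem _ hx)
  set a : V → ℕ := fun x => rk (U0 x) with ha
  set b : V → ℕ := fun x => rk (W0 x) with hb
  set jf : V → ℕ := fun x =>
    if a x < b x then nodeJ Λ (a x) (b x) else nodeJ Λ (b x) (a x) with hjf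
  set pf : V → ℕ := fun x =>
    if a x < b x then nodeP Λ (a x) (b x) else nodeP Λ (b x) (a x) with hpf
  -- no edges within a level of part P
  have hP : ∀ x ∈ A, ∀ y ∈ A, x ≠ y → a x < b x → a y < b y → jf x = jf y →
      ¬ G.Adj x y := by
    intro x hx y hy hxy hpx hpy hj hadj
    have hjx : jf x = nodeJ Λ (a x) (b x) := if_pos hpx
    have hjy : jf y = nodeJ Λ (a y) (b y) := if_pos hpy
    have hj' : nodeJ Λ (a x) (b x) = nodeJ Λ (a y) (b y) := by rw [← hjx, ← hjy, hj]
    obtain ⟨-, hx1, hx2, hx3, hx4⟩ := node_spec hpx (rk_lt _)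
    obtain ⟨-, hy1, hy2, hy3, hy4⟩ := node_spec hpy (rk_lt _)
    have hfalse : ∀ u v : V, u ∈ A → v ∈ A → a u < b u → a v < b v →
        nodeJ Λ (a u) (b u) = nodeJ Λ (a v) (b v) → U0 u ≠ W0 v := by
      intro u v hu hv hpu hpv hjuv heq
      have heqr : a u = b v := by
        have e1 : a u = rk (U0 u) := rfl
        have e2 : b v = rk (W0 v) := rfl
        rw [e1, e2, rk_eq_iff (hUE u hu) (hWE v hv)]
        exact heq
      obtain ⟨-, hu1, hu2, hu3, hu4⟩ := node_spec hpu (rk_lt _)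
      obtain ⟨-, hv1, hv2, hv3, hv4⟩ := node_spec hpv (rk_lt _)
      rcases lt_trichotomy (nodeP Λ (a u) (b u)) (nodeP Λ (a v) (b v)) with hp | hp | hp
      · have hsep := node_sep hpu (rk_lt _) hpv (rk_lt _) hjuv hp
        omega
      · have := congrArg (fun z => z / 2 ^ (nodeJ Λ (a u) (b u))) heqr
        rw [hu3] at this
        rw [hjuv] at this
        rw [hv4] at this
        omega
      · have hsep := node_sep hpv (rk_lt _) hpu (rk_lt _) hjuv.symm hp
        omega
    rcases (hex x hx y hy hxy).1 hadj with ⟨h1, -⟩ | ⟨h1, -⟩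
    · exact hfalse x y hx hy hpx hpy hj' h1
    · exact hfalse y x hy hx hpy hpx hj'.symm h1
  -- no edges within a level of part I
  have hI : ∀ x ∈ A, ∀ y ∈ A, x ≠ y → b x < a x → b y < a y → jf x = jf y →
      ¬ G.Adj x y := by
    intro x hx y hy hxy hpx hpy hj hadj
    have hjx : jf x = nodeJ Λ (b x) (a x) := by
      rw [hjf]
      simp only [if_neg (by omega : ¬ a x < b x)]
    have hjy : jf y = nodeJ Λ (b y) (a y) := by
      rw [hjf]
      simp only [if_neg (by omega : ¬ a y < b y)]
    have hj' : nodeJ Λ (b x) (a x) = nodeJ Λ (b y) (a y) := by rw [← hjx, ← hjy, hj]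
    have hfalse : ∀ u v : V, u ∈ A → v ∈ A → b u < a u → b v < a v →
        nodeJ Λ (b u) (a u) = nodeJ Λ (b v) (a v) → U0 u ≠ W0 v := by
      intro u v hu hv hpu hpv hjuv heq
      have heqr : a u = b v := by
        have e1 : a u = rk (U0 u) := rfl
        have e2 : b v = rk (W0 v) := rfl
        rw [e1, e2, rk_eq_iff (hUE u hu) (hWE v hv)]
        exact heq
      obtain ⟨-, hu1, hu2, hu3, hu4⟩ := node_spec hpu (rk_lt _)
      obtain ⟨-, hv1, hv2, hv3, hv4⟩ := node_spec hpv (rk_lt _)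
      rcases lt_trichotomy (nodeP Λ (b u) (a u)) (nodeP Λ (b v) (a v)) with hp | hp | hp
      · have hsep := node_sep hpu (rk_lt _) hpv (rk_lt _) hjuv hp
        omega
      · have := congrArg (fun z => z / 2 ^ (nodeJ Λ (b u) (a u))) heqr
        rw [hu4] at this
        rw [hjuv] at this
        rw [hv3] at this
        omega
      · have hsep := node_sep hpv (rk_lt _) hpu (rk_lt _) hjuv.symm hp
        omega
    rcases (hex x hx y hy hxy).1 hadj with ⟨h1, -⟩ | ⟨h1, -⟩
    · exact hfalse x y hx hy hpx hpy hj' h1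
    · exact hfalse y x hy hx hpy hpx hj'.symm h1
  -- part D : classes by value
  have hD : ∀ c : ℕ, ∃ col : V → ℕ,
      (∀ x ∈ A.filter (fun z => a z = b z ∧ a z = c),
       ∀ y ∈ A.filter (fun z => a z = b z ∧ a z = c), G.Adj x y → col x ≠ col y) ∧
      ∀ x ∈ A.filter (fun z => a z = b z ∧ a z = c), col x < Bnd s Λ k := by
    intro c
    apply IH V G l U W o ν _ ?_ ?_ hfree
    · have := Finset.card_le_card (Finset.filter_subset (fun z => a z = b z ∧ a z = c) A)
      omega
    · intro x hx y hy hxy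
      rw [Finset.mem_filter] at hx hy
      obtain ⟨hxA, hx1, hx2⟩ := hx
      obtain ⟨hyA, hy1, hy2⟩ := hy
      rw [hex x hxA y hyA hxy]
      have ht1 : U0 x = W0 y := by
        rw [← rk_eq_iff (hUE x hxA) (hWE y hyA)]
        have e1 : rk (U0 x) = a x := rfl
        have e2 : rk (W0 y) = b y := rfl
        omega
      have ht2 : U0 y = W0 x := by
        rw [← rk_eq_iff (hUE y hyA) (hWE x hxA)]
        have e1 : rk (U0 y) = a y := rfl
        have e2 : rk (W0 x) = b x := rfl
        omega
      constructor
      · rintro (⟨-, h⟩ | ⟨-, h⟩)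
        · exact Or.inl h
        · exact Or.inr h
      · rintro (h | h)
        · exact Or.inl ⟨ht1, h⟩
        · exact Or.inr ⟨ht2, h⟩
  choose cold hcold1 hcold2 using hD
  -- assembly
  set g : V → ℕ := fun x => if a x < b x then 0 else if b x < a x then 1 else 2 with hg
  set inner : V → ℕ := fun x => if a x = b x then cold (a x) x else jf x with hinner
  have hjfΛ : ∀ x ∈ A, a x ≠ b x → jf x < Λ := by
    intro x hx hne
    rcases lt_or_gt_of_ne hne with h | h
    · rw [hjf]
      simp only [if_pos h]
      exact (node_spec h (rk_lt _)).1
    · rw [hjf]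
      simp only [if_neg (by omega : ¬ a x < b x)]
      exact (node_spec h (rk_lt _)).1
  have hinner_lt : ∀ x ∈ A, inner x < Λ^2 * (Bnd s Λ k)^2 := by
    intro x hx
    have hΛBk : Λ ≤ Λ^2 * (Bnd s Λ k)^2 := le_sq_mul hΛpos hBk
    have hBkB : Bnd s Λ k ≤ Λ^2 * (Bnd s Λ k)^2 := by
      have := le_sq_mul hBk hΛpos
      calc Bnd s Λ k ≤ (Bnd s Λ k)^2 * Λ^2 := this
      _ = Λ^2 * (Bnd s Λ k)^2 := by ring
    rw [hinner]
    by_cases h : a x = b x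
    · simp only [if_pos h]
      have := hcold2 (a x) x (Finset.mem_filter.2 ⟨hx, h, rfl⟩)
      omega
    · simp only [if_neg h]
      have := hjfΛ x hx h
      omega
  refine ⟨fun x => g x * (Λ^2 * (Bnd s Λ k)^2) + inner x, ?_, ?_⟩
  · intro x hx y hy hadj he
    obtain ⟨hge, hie⟩ := pack_inj (hinner_lt x hx) (hinner_lt y hy) he
    have hxy : x ≠ y := hadj.ne
    by_cases h1 : a x < b x
    · have h2 : a y < b y := by
        rw [hg] at hge
        simp only [if_pos h1] at hge
        by_contra h2
        rcases lt_trichotomy (a y) (b y) with h' | h' | h'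
        · exact h2 h'
        · simp only [if_neg (by omega : ¬ a y < b y), if_neg (by omega : ¬ b y < a y)] at hge
          omega
        · simp only [if_neg (by omega : ¬ a y < b y), if_pos h'] at hge
          omega
      rw [hinner] at hie
      simp only [if_neg (by omega : ¬ a x = b x), if_neg (by omega : ¬ a y = b y)] at hie
      exact hP x hx y hy hxy h1 h2 hie hadj
    · by_cases h1' : b x < a x
      · have h2 : b y < a y := by
          rw [hg] at hge
          simp only [if_neg h1, if_pos h1'] at hge
          rcases lt_trichotomy (a y) (b y) with h' | h' | h'
          · simp only [if_pos h'] at hge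
            omega
          · simp only [if_neg (by omega : ¬ a y < b y), if_neg (by omega : ¬ b y < a y)] at hge
            omega
          · exact h'
        rw [hinner] at hie
        simp only [if_neg (by omega : ¬ a x = b x), if_neg (by omega : ¬ a y = b y)] at hie
        exact hI x hx y hy hxy h1' h2 hie hadj
      · have hdx : a x = b x := by omega
        have h2 : a y = b y := by
          rw [hg] at hge
          simp only [if_neg h1, if_neg h1'] at hge
          rcases lt_trichotomy (a y) (b y) with h' | h' | h'
          · simp only [if_pos h'] at hge
            omega
          · exact h'
          · simp only [if_neg (by omega : ¬ a y < b y), if_pos h'] at hge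
            omega
        -- same class
        have hsame : a x = a y := by
          rcases (hex x hx y hy hxy).1 hadj with ⟨hv, -⟩ | ⟨hv, -⟩
          · have : a x = b y := by
              have e1 : a x = rk (U0 x) := rfl
              have e2 : b y = rk (W0 y) := rfl
              rw [e1, e2, rk_eq_iff (hUE x hx) (hWE y hy)]
              exact hv
            omega
          · have : a y = b x := by
              have e1 : a y = rk (U0 y) := rfl
              have e2 : b x = rk (W0 x) := rfl
              rw [e1, e2, rk_eq_iff (hUE y hy) (hWE x hx)]
              exact hv
            omega
        rw [hinner] at hie
        simp only [if_pos hdx, if_pos h2] at hie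
        rw [hsame] at hie
        exact hcold1 (a y) x (Finset.mem_filter.2 ⟨hx, hdx, hsame⟩)
          y (Finset.mem_filter.2 ⟨hy, h2, rfl⟩) hadj hie
  · intro x hx
    have h1 := hinner_lt x hx
    have h2 : g x ≤ 2 := by
      have he : g x = if a x < b x then 0 else if b x < a x then 1 else 2 := rfl
      rw [he]
      by_cases h : a x < b x
      · simp [h]
      · by_cases h' : b x < a x <;> simp [h, h']
    have h4 : 3 * Λ^2 * (Bnd s Λ k)^2 = 3 * (Λ^2 * (Bnd s Λ k)^2) := by ring
    have h5 : g x * (Λ ^ 2 * Bnd s Λ k ^ 2) ≤ 2 * (Λ ^ 2 * Bnd s Λ k ^ 2) :=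
      Nat.mul_le_mul_right _ h2
    show g x * (Λ ^ 2 * Bnd s Λ k ^ 2) + inner x < 3 * Λ ^ 2 * Bnd s Λ k ^ 2
    rw [h4]
    omega

/-! ### Step: strict comparison -/

lemma step_lt (s Λ k : ℕ) (hs : 0 < s) (IH : CoreStmt s Λ k)
    (V : Type) [Fintype V] (G : SimpleGraph V) (l : ℕ)
    (U0 W0 : V → ℝ) (U W : Fin k → V → ℝ) (o : Fin k → Ordering) (ν : Fin l → V → ℝ)
    (A : Finset V) (hA : 2 * A.card < 2 ^ Λ)
    (hex : ∀ x ∈ A, ∀ y ∈ A, x ≠ y →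
      (G.Adj x y ↔ (U0 x < W0 y ∧ Rel U W o ν x y) ∨ (U0 y < W0 x ∧ Rel U W o ν y x)))
    (hfree : G.CliqueFree s) :
    ∃ col : V → ℕ, (∀ x ∈ A, ∀ y ∈ A, G.Adj x y → col x ≠ col y) ∧
      ∀ x ∈ A, col x < 3 * Λ^2 * (Bnd s Λ k)^2 := by
  classical
  rcases Finset.eq_empty_or_nonempty A with hAe | hAne
  · exact ⟨fun _ => 0, by simp [hAe], by simp [hAe]⟩
  have hΛpos : 0 < Λ := by
    rcases hAne with ⟨x0, hx0⟩
    have h1 : 1 ≤ A.card := Finset.card_pos.2 ⟨x0, hx0⟩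
    by_contra hcon
    push_neg at hcon
    have hcon' : Λ = 0 := by omega
    rw [hcon', pow_zero] at hA
    omega
  have hBk : 0 < Bnd s Λ k := Bnd_pos hs hΛpos k
  set E : Finset ℝ := A.image U0 ∪ A.image W0 with hE
  set rk : ℝ → ℕ := fun r => ((E.filter (fun e => e < r)).card) with hrk
  have hEcard : E.card < 2 ^ Λ := by
    have h1 : E.card ≤ (A.image U0).card + (A.image W0).card := by
      rw [hE]
      exact Finset.card_union_le _ _
    have h2 := Finset.card_image_le (s := A) (f := U0)
    have h3 := Finset.card_image_le (s := A) (f := W0)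
    omega
  have rk_lt : ∀ r, rk r < 2 ^ Λ := fun r =>
    lt_of_le_of_lt (Finset.card_le_card (Finset.filter_subset _ _)) hEcard
  have rk_mono : ∀ {r1 r2 : ℝ}, r1 ≤ r2 → rk r1 ≤ rk r2 := by
    intro r1 r2 h
    apply Finset.card_le_card
    intro e he
    rw [Finset.mem_filter] at he ⊢
    exact ⟨he.1, lt_of_lt_of_le he.2 h⟩
  have rk_strict : ∀ {r1 r2 : ℝ}, r1 ∈ E → r1 < r2 → rk r1 < rk r2 := by
    intro r1 r2 h1 h
    apply Finset.card_lt_card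
    constructor
    · intro e he
      rw [Finset.mem_filter] at he ⊢
      exact ⟨he.1, lt_trans he.2 h⟩
    · intro hsub
      have h2 : r1 ∈ E.filter (fun e => e < r2) := Finset.mem_filter.2 ⟨h1, h⟩
      have h3 := hsub h2
      rw [Finset.mem_filter] at h3
      exact lt_irrefl _ h3.2
  have rk_lt_iff : ∀ {r1 r2 : ℝ}, r1 ∈ E → r2 ∈ E → (rk r1 < rk r2 ↔ r1 < r2) := by
    intro r1 r2 h1 h2
    constructor
    · intro h
      by_contra hcon
      push_neg at hcon
      exact absurd (rk_mono hcon) (by omega)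
    · exact rk_strict h1
  have hUE : ∀ x ∈ A, U0 x ∈ E := fun x hx =>
    Finset.mem_union_left _ (Finset.mem_image_of_mem _ hx)
  have hWE : ∀ x ∈ A, W0 x ∈ E := fun x hx =>
    Finset.mem_union_right _ (Finset.mem_image_of_mem _ hx)
  set a : V → ℕ := fun x => rk (U0 x) with ha
  set b : V → ℕ := fun x => rk (W0 x) with hb
  have tIff : ∀ x ∈ A, ∀ y ∈ A, (U0 x < W0 y ↔ a x < b y) := by
    intro x hx y hy
    exact (rk_lt_iff (hUE x hx) (hWE y hy)).symm
  set jf : V → ℕ := fun x =>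
    if a x < b x then nodeJ Λ (a x) (b x) else nodeJ Λ (b x) (a x) with hjf
  set pf : V → ℕ := fun x =>
    if a x < b x then nodeP Λ (a x) (b x) else nodeP Λ (b x) (a x) with hpf
  have hjP : ∀ z, a z < b z → jf z = nodeJ Λ (a z) (b z) := fun z h => if_pos h
  have hpP : ∀ z, a z < b z → pf z = nodeP Λ (a z) (b z) := fun z h => if_pos h
  have hjI : ∀ z, b z < a z → jf z = nodeJ Λ (b z) (a z) := by
    intro z h
    rw [hjf]
    simp only [if_neg (by omega : ¬ a z < b z)]
  have hpI : ∀ z, b z < a z → pf z = nodeP Λ (b z) (a z) := by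
    intro z h
    rw [hpf]
    simp only [if_neg (by omega : ¬ a z < b z)]
  have keyPsame : ∀ x, ∀ y, a x < b x → a y < b y → jf x = jf y → pf x = pf y →
      a x < b y := by
    intro x y h1 h2 hj hp
    have hj' : nodeJ Λ (a x) (b x) = nodeJ Λ (a y) (b y) := by
      rw [← hjP x h1, ← hjP y h2, hj]
    have hp' : nodeP Λ (a x) (b x) = nodeP Λ (a y) (b y) := by
      rw [← hpP x h1, ← hpP y h2, hp]
    exact node_lt_of_eq h1 (rk_lt _) h2 (rk_lt _) hj' hp'
  have keyPsep : ∀ x, ∀ y, a x < b x → a y < b y → jf x = jf y → pf x < pf y →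
      b x < a y := by
    intro x y h1 h2 hj hp
    have hj' : nodeJ Λ (a x) (b x) = nodeJ Λ (a y) (b y) := by
      rw [← hjP x h1, ← hjP y h2, hj]
    have hp' : nodeP Λ (a x) (b x) < nodeP Λ (a y) (b y) := by
      rw [← hpP x h1, ← hpP y h2]
      exact hp
    exact node_sep h1 (rk_lt _) h2 (rk_lt _) hj' hp'
  have keyIsame : ∀ x, ∀ y, b x < a x → b y < a y → jf x = jf y → pf x = pf y →
      b y < a x := by
    intro x y h1 h2 hj hp
    have hj' : nodeJ Λ (b y) (a y) = nodeJ Λ (b x) (a x) := by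
      rw [← hjI x h1, ← hjI y h2, hj]
    have hp' : nodeP Λ (b y) (a y) = nodeP Λ (b x) (a x) := by
      rw [← hpI x h1, ← hpI y h2, hp]
    exact node_lt_of_eq h2 (rk_lt _) h1 (rk_lt _) hj' hp'
  have keyIsep : ∀ x, ∀ y, b x < a x → b y < a y → jf x = jf y → pf x < pf y →
      a x < b y := by
    intro x y h1 h2 hj hp
    have hj' : nodeJ Λ (b x) (a x) = nodeJ Λ (b y) (a y) := by
      rw [← hjI x h1, ← hjI y h2, hj]
    have hp' : nodeP Λ (b x) (a x) < nodeP Λ (b y) (a y) := by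
      rw [← hpI x h1, ← hpI y h2]
      exact hp
    exact node_sep h1 (rk_lt _) h2 (rk_lt _) hj' hp'
  have hjfΛ : ∀ x, a x ≠ b x → jf x < Λ := by
    intro x hne
    rcases lt_or_gt_of_ne hne with h | h
    · rw [hjP x h]
      exact (node_spec h (rk_lt _)).1
    · rw [hjI x h]
      exact (node_spec h (rk_lt _)).1
  set T : V → V → Prop := fun x y => U0 x < W0 y ∧ U0 y < W0 x with hT
  let Ga : SimpleGraph V :=
    ⟨fun x y => G.Adj x y ∧ T x y,
     ⟨fun x y h => ⟨h.1.symm, h.2.2, h.2.1⟩⟩,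
     ⟨fun x h => G.loopless.irrefl x h.1⟩⟩
  let Gb : SimpleGraph V :=
    ⟨fun x y => G.Adj x y ∧ ¬ T x y,
     ⟨fun x y h => ⟨h.1.symm, fun hc => h.2 ⟨hc.2, hc.1⟩⟩⟩,
     ⟨fun x h => G.loopless.irrefl x h.1⟩⟩
  have hGaAdj : ∀ x y, Ga.Adj x y ↔ (G.Adj x y ∧ T x y) := fun _ _ => Iff.rfl
  have hGbAdj : ∀ x y, Gb.Adj x y ↔ (G.Adj x y ∧ ¬ T x y) := fun _ _ => Iff.rfl
  have hGaFree : Ga.CliqueFree s :=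
    SimpleGraph.CliqueFree.anti (fun x y h => h.1) hfree
  have hGbFree : Gb.CliqueFree s :=
    SimpleGraph.CliqueFree.anti (fun x y h => h.1) hfree
  set ν' : Fin (l+1) → V → ℝ := Fin.cons (fun z => (pf z : ℝ)) ν with hν'
  set νd : Fin (l+1) → V → ℝ := Fin.cons (fun z => (a z : ℝ)) ν with hνd
  -- part P, graph Ga, classes (j, p)
  have hPa : ∀ jq : ℕ × ℕ, ∃ col : V → ℕ,
      (∀ x ∈ A.filter (fun z => a z < b z ∧ jf z = jq.1 ∧ pf z = jq.2),
       ∀ y ∈ A.filter (fun z => a z < b z ∧ jf z = jq.1 ∧ pf z = jq.2),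
        Ga.Adj x y → col x ≠ col y) ∧
      ∀ x ∈ A.filter (fun z => a z < b z ∧ jf z = jq.1 ∧ pf z = jq.2),
        col x < Bnd s Λ k := by
    intro jq
    apply IH V Ga l U W o ν _ ?_ ?_ hGaFree
    · have := Finset.card_le_card
        (Finset.filter_subset (fun z => a z < b z ∧ jf z = jq.1 ∧ pf z = jq.2) A)
      omega
    · intro x hx y hy hxy
      rw [Finset.mem_filter] at hx hy
      obtain ⟨hxA, hx1, hx2, hx3⟩ := hx
      obtain ⟨hyA, hy1, hy2, hy3⟩ := hy
      have ht1 : U0 x < W0 y :=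
        (tIff x hxA y hyA).2 (keyPsame x y hx1 hy1 (by omega) (by omega))
      have ht2 : U0 y < W0 x :=
        (tIff y hyA x hxA).2 (keyPsame y x hy1 hx1 (by omega) (by omega))
      rw [hGaAdj, hex x hxA y hyA hxy]
      constructor
      · rintro ⟨(⟨-, h⟩ | ⟨-, h⟩), -⟩
        · exact Or.inl h
        · exact Or.inr h
      · rintro (h | h)
        · exact ⟨Or.inl ⟨ht1, h⟩, ht1, ht2⟩
        · exact ⟨Or.inr ⟨ht2, h⟩, ht1, ht2⟩
  choose cola hcola1 hcola2 using hPa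
  -- part P, graph Gb, classes j
  have hPb : ∀ j : ℕ, ∃ col : V → ℕ,
      (∀ x ∈ A.filter (fun z => a z < b z ∧ jf z = j),
       ∀ y ∈ A.filter (fun z => a z < b z ∧ jf z = j),
        Gb.Adj x y → col x ≠ col y) ∧
      ∀ x ∈ A.filter (fun z => a z < b z ∧ jf z = j), col x < Bnd s Λ k := by
    intro j
    apply IH V Gb (l+1) U W o ν' _ ?_ ?_ hGbFree
    · have := Finset.card_le_card (Finset.filter_subset (fun z => a z < b z ∧ jf z = j) A)
      omega
    · intro x hx y hy hxy
      rw [Finset.mem_filter] at hx hy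
      obtain ⟨hxA, hx1, hx2⟩ := hx
      obtain ⟨hyA, hy1, hy2⟩ := hy
      rw [hGbAdj, hν', Rel_cons, Rel_cons, hex x hxA y hyA hxy]
      rcases lt_trichotomy (pf x) (pf y) with hp | hp | hp
      · have hsep := keyPsep x y hx1 hy1 (by omega) hp
        have ht1 : U0 x < W0 y := (tIff x hxA y hyA).2 (by omega)
        have hnt2 : ¬ U0 y < W0 x := by
          rw [tIff y hyA x hxA]
          omega
        constructor
        · rintro ⟨(⟨-, h⟩ | ⟨hc, -⟩), -⟩
          · exact Or.inl ⟨by exact_mod_cast hp, h⟩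
          · exact absurd hc hnt2
        · rintro (⟨-, h⟩ | ⟨hc, -⟩)
          · exact ⟨Or.inl ⟨ht1, h⟩, fun hc => hnt2 hc.2⟩
          · have : pf y < pf x := by exact_mod_cast hc
            omega
      · have hTxy : T x y := by
          rw [hT]
          exact ⟨(tIff x hxA y hyA).2 (keyPsame x y hx1 hy1 (by omega) hp),
                 (tIff y hyA x hxA).2 (keyPsame y x hy1 hx1 (by omega) hp.symm)⟩
        constructor
        · rintro ⟨-, hn⟩
          exact absurd hTxy hn
        · rintro (⟨hc, -⟩ | ⟨hc, -⟩) <;>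
          · have := (Nat.cast_lt (α := ℝ)).1 hc
            omega
      · have hsep := keyPsep y x hy1 hx1 (by omega) hp
        have ht1 : U0 y < W0 x := (tIff y hyA x hxA).2 (by omega)
        have hnt2 : ¬ U0 x < W0 y := by
          rw [tIff x hxA y hyA]
          omega
        constructor
        · rintro ⟨(⟨hc, -⟩ | ⟨-, h⟩), -⟩
          · exact absurd hc hnt2
          · exact Or.inr ⟨by exact_mod_cast hp, h⟩
        · rintro (⟨hc, -⟩ | ⟨-, h⟩)
          · have : pf x < pf y := by exact_mod_cast hc
            omega
          · exact ⟨Or.inr ⟨ht1, h⟩, fun hc => hnt2 hc.1⟩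
  choose colb hcolb1 hcolb2 using hPb
  -- part I, graph G, classes j
  have hIc : ∀ j : ℕ, ∃ col : V → ℕ,
      (∀ x ∈ A.filter (fun z => b z < a z ∧ jf z = j),
       ∀ y ∈ A.filter (fun z => b z < a z ∧ jf z = j),
        G.Adj x y → col x ≠ col y) ∧
      ∀ x ∈ A.filter (fun z => b z < a z ∧ jf z = j), col x < Bnd s Λ k := by
    intro j
    apply IH V G (l+1) U W o ν' _ ?_ ?_ hfree
    · have := Finset.card_le_card (Finset.filter_subset (fun z => b z < a z ∧ jf z = j) A)
      omega
    · intro x hx y hy hxy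
      rw [Finset.mem_filter] at hx hy
      obtain ⟨hxA, hx1, hx2⟩ := hx
      obtain ⟨hyA, hy1, hy2⟩ := hy
      rw [hν', Rel_cons, Rel_cons, hex x hxA y hyA hxy]
      rcases lt_trichotomy (pf x) (pf y) with hp | hp | hp
      · have hsep := keyIsep x y hx1 hy1 (by omega) hp
        have ht1 : U0 x < W0 y := (tIff x hxA y hyA).2 (by omega)
        have hnt2 : ¬ U0 y < W0 x := by
          rw [tIff y hyA x hxA]
          omega
        constructor
        · rintro (⟨-, h⟩ | ⟨hc, -⟩)
          · exact Or.inl ⟨by exact_mod_cast hp, h⟩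
          · exact absurd hc hnt2
        · rintro (⟨-, h⟩ | ⟨hc, -⟩)
          · exact Or.inl ⟨ht1, h⟩
          · have : pf y < pf x := by exact_mod_cast hc
            omega
      · have hn1 := keyIsame x y hx1 hy1 (by omega) hp
        have hn2 := keyIsame y x hy1 hx1 (by omega) hp.symm
        constructor
        · rintro (⟨hc, -⟩ | ⟨hc, -⟩)
          · rw [tIff x hxA y hyA] at hc
            omega
          · rw [tIff y hyA x hxA] at hc
            omega
        · rintro (⟨hc, -⟩ | ⟨hc, -⟩) <;>
          · have := (Nat.cast_lt (α := ℝ)).1 hc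
            omega
      · have hsep := keyIsep y x hy1 hx1 (by omega) hp
        have ht1 : U0 y < W0 x := (tIff y hyA x hxA).2 (by omega)
        have hnt2 : ¬ U0 x < W0 y := by
          rw [tIff x hxA y hyA]
          omega
        constructor
        · rintro (⟨hc, -⟩ | ⟨-, h⟩)
          · exact absurd hc hnt2
          · exact Or.inr ⟨by exact_mod_cast hp, h⟩
        · rintro (⟨hc, -⟩ | ⟨-, h⟩)
          · have : pf x < pf y := by exact_mod_cast hc
            omega
          · exact Or.inr ⟨ht1, h⟩
  choose colc hcolc1 hcolc2 using hIc
  -- part D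
  have hDc : ∃ col : V → ℕ,
      (∀ x ∈ A.filter (fun z => a z = b z),
       ∀ y ∈ A.filter (fun z => a z = b z), G.Adj x y → col x ≠ col y) ∧
      ∀ x ∈ A.filter (fun z => a z = b z), col x < Bnd s Λ k := by
    apply IH V G (l+1) U W o νd _ ?_ ?_ hfree
    · have := Finset.card_le_card (Finset.filter_subset (fun z => a z = b z) A)
      omega
    · intro x hx y hy hxy
      rw [Finset.mem_filter] at hx hy
      obtain ⟨hxA, hx1⟩ := hx
      obtain ⟨hyA, hy1⟩ := hy
      rw [hνd, Rel_cons, Rel_cons, hex x hxA y hyA hxy]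
      have e1 : (U0 x < W0 y) ↔ ((a x : ℝ) < (a y : ℝ)) := by
        rw [tIff x hxA y hyA, Nat.cast_lt]
        omega
      have e2 : (U0 y < W0 x) ↔ ((a y : ℝ) < (a x : ℝ)) := by
        rw [tIff y hyA x hxA, Nat.cast_lt]
        omega
      rw [e1, e2]
  obtain ⟨cold, hcold1, hcold2⟩ := hDc
  -- assembly
  have packbound : ∀ j c : ℕ, j < Λ → c < Bnd s Λ k →
      j * Bnd s Λ k + c < Λ * Bnd s Λ k := by
    intro j c hj hc
    have h1 : (j+1) * Bnd s Λ k ≤ Λ * Bnd s Λ k := Nat.mul_le_mul_right _ (by omega)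
    have h2 : (j+1) * Bnd s Λ k = j * Bnd s Λ k + Bnd s Λ k := by ring
    omega
  set Bk := Bnd s Λ k with hBkdef
  set inner : V → ℕ := fun x =>
    if a x < b x then
      (jf x * Bk + cola (jf x, pf x) x) * (Λ * Bk) + (jf x * Bk + colb (jf x) x)
    else if b x < a x then jf x * Bk + colc (jf x) x
    else cold x with hinner
  set g : V → ℕ := fun x => if a x < b x then 0 else if b x < a x then 1 else 2 with hg
  have mema : ∀ x ∈ A, a x < b x →
      x ∈ A.filter (fun z => a z < b z ∧ jf z = jf x ∧ pf z = pf x) :=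
    fun x hx h => Finset.mem_filter.2 ⟨hx, h, rfl, rfl⟩
  have memb : ∀ x ∈ A, a x < b x →
      x ∈ A.filter (fun z => a z < b z ∧ jf z = jf x) :=
    fun x hx h => Finset.mem_filter.2 ⟨hx, h, rfl⟩
  have memc : ∀ x ∈ A, b x < a x →
      x ∈ A.filter (fun z => b z < a z ∧ jf z = jf x) :=
    fun x hx h => Finset.mem_filter.2 ⟨hx, h, rfl⟩
  have hinner_lt : ∀ x ∈ A, inner x < Λ^2 * Bk^2 := by
    intro x hx
    have e1 : Λ^2 * Bk^2 = (Λ * Bk) * (Λ * Bk) := by ring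
    rw [hinner]
    by_cases h1 : a x < b x
    · simp only [if_pos h1]
      have c1 : jf x * Bk + cola (jf x, pf x) x < Λ * Bk :=
        packbound _ _ (hjfΛ x (by omega)) (hcola2 (jf x, pf x) x (mema x hx h1))
      have c2 : jf x * Bk + colb (jf x) x < Λ * Bk :=
        packbound _ _ (hjfΛ x (by omega)) (hcolb2 (jf x) x (memb x hx h1))
      rw [e1]
      have h3 : (jf x * Bk + cola (jf x, pf x) x) * (Λ * Bk) ≤ (Λ * Bk - 1) * (Λ * Bk) :=
        Nat.mul_le_mul_right _ (by omega)
      have h4 : 0 < Λ * Bk := Nat.mul_pos hΛpos hBk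
      have h5 : (Λ * Bk - 1) * (Λ * Bk) + (Λ * Bk) = (Λ * Bk) * (Λ * Bk) := by
        have h6 : Λ * Bk - 1 + 1 = Λ * Bk := by omega
        calc (Λ * Bk - 1) * (Λ * Bk) + (Λ * Bk) = (Λ * Bk - 1 + 1) * (Λ * Bk) := by ring
        _ = (Λ * Bk) * (Λ * Bk) := by rw [h6]
      omega
    · by_cases h2 : b x < a x
      · simp only [if_neg h1, if_pos h2]
        have c1 : jf x * Bk + colc (jf x) x < Λ * Bk :=
          packbound _ _ (hjfΛ x (by omega)) (hcolc2 (jf x) x (memc x hx h2))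
        have h4 : 0 < Λ * Bk := Nat.mul_pos hΛpos hBk
        have h5 : Λ * Bk ≤ Λ^2 * Bk^2 := by
          rw [e1]
          exact Nat.le_mul_of_pos_left _ h4
        omega
      · simp only [if_neg h1, if_neg h2]
        have c1 : cold x < Bk :=
          hcold2 x (Finset.mem_filter.2 ⟨hx, by omega⟩)
        have h4 : 0 < Λ * Bk := Nat.mul_pos hΛpos hBk
        have h5 : Λ * Bk ≤ Λ^2 * Bk^2 := by
          rw [e1]
          exact Nat.le_mul_of_pos_left _ h4
        have h6 : Bk ≤ Λ * Bk := Nat.le_mul_of_pos_left _ hΛpos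
        omega
  refine ⟨fun x => g x * (Λ^2 * Bk^2) + inner x, ?_, ?_⟩
  · intro x hx y hy hadj he
    obtain ⟨hge, hie⟩ := pack_inj (hinner_lt x hx) (hinner_lt y hy) he
    have hxy : x ≠ y := hadj.ne
    by_cases h1 : a x < b x
    · have h2 : a y < b y := by
        rw [hg] at hge
        simp only [if_pos h1] at hge
        by_contra h2
        rcases lt_trichotomy (a y) (b y) with h' | h' | h'
        · exact h2 h'
        · simp only [if_neg (by omega : ¬ a y < b y), if_neg (by omega : ¬ b y < a y)] at hge
          omega
        · simp only [if_neg (by omega : ¬ a y < b y), if_pos h'] at hge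
          omega
      rw [hinner] at hie
      simp only [if_pos h1, if_pos h2] at hie
      have bc1x : jf x * Bk + cola (jf x, pf x) x < Λ * Bk :=
        packbound _ _ (hjfΛ x (by omega)) (hcola2 (jf x, pf x) x (mema x hx h1))
      have bc1y : jf y * Bk + cola (jf y, pf y) y < Λ * Bk :=
        packbound _ _ (hjfΛ y (by omega)) (hcola2 (jf y, pf y) y (mema y hy h2))
      have bc2x : jf x * Bk + colb (jf x) x < Λ * Bk :=
        packbound _ _ (hjfΛ x (by omega)) (hcolb2 (jf x) x (memb x hx h1))
      have bc2y : jf y * Bk + colb (jf y) y < Λ * Bk :=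
        packbound _ _ (hjfΛ y (by omega)) (hcolb2 (jf y) y (memb y hy h2))
      obtain ⟨hc1, hc2⟩ := pack_inj bc2x bc2y hie
      obtain ⟨hj1, hcolaeq⟩ := pack_inj
        (hcola2 (jf x, pf x) x (mema x hx h1)) (hcola2 (jf y, pf y) y (mema y hy h2)) hc1
      obtain ⟨hj2, hcolbeq⟩ := pack_inj
        (hcolb2 (jf x) x (memb x hx h1)) (hcolb2 (jf y) y (memb y hy h2)) hc2
      by_cases hTxy : T x y
      · -- edge of Ga: same (j, p) class
        have hpeq : pf x = pf y := by
          rcases lt_trichotomy (pf x) (pf y) with hp | hp | hp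
          · have hsep := keyPsep x y h1 h2 hj1 hp
            exact absurd ((tIff y hy x hx).1 hTxy.2) (by omega)
          · exact hp
          · have hsep := keyPsep y x h2 h1 hj1.symm hp
            exact absurd ((tIff x hx y hy).1 hTxy.1) (by omega)
        have hmy : y ∈ A.filter (fun z => a z < b z ∧ jf z = jf x ∧ pf z = pf x) :=
          Finset.mem_filter.2 ⟨hy, h2, hj1.symm, hpeq.symm⟩
        have := hcola1 (jf x, pf x) x (mema x hx h1) y hmy ((hGaAdj x y).2 ⟨hadj, hTxy⟩)
        apply this
        rw [hcolaeq]
        rw [hj1, hpeq]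
      · have hmy : y ∈ A.filter (fun z => a z < b z ∧ jf z = jf x) :=
          Finset.mem_filter.2 ⟨hy, h2, hj2.symm⟩
        have := hcolb1 (jf x) x (memb x hx h1) y hmy ((hGbAdj x y).2 ⟨hadj, hTxy⟩)
        apply this
        rw [hcolbeq, hj2]
    · by_cases h1' : b x < a x
      · have h2 : b y < a y := by
          rw [hg] at hge
          simp only [if_neg h1, if_pos h1'] at hge
          rcases lt_trichotomy (a y) (b y) with h' | h' | h'
          · simp only [if_pos h'] at hge
            omega
          · simp only [if_neg (by omega : ¬ a y < b y), if_neg (by omega : ¬ b y < a y)] at hge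
            omega
          · exact h'
        rw [hinner] at hie
        simp only [if_neg h1, if_neg (by omega : ¬ a y < b y), if_pos h1', if_pos h2] at hie
        obtain ⟨hj1, hcolceq⟩ := pack_inj
          (hcolc2 (jf x) x (memc x hx h1')) (hcolc2 (jf y) y (memc y hy h2)) hie
        have hmy : y ∈ A.filter (fun z => b z < a z ∧ jf z = jf x) :=
          Finset.mem_filter.2 ⟨hy, h2, hj1.symm⟩
        have := hcolc1 (jf x) x (memc x hx h1') y hmy hadj
        apply this
        rw [hcolceq, hj1]
      · have hdx : a x = b x := by omega
        have h2 : a y = b y := by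
          rw [hg] at hge
          simp only [if_neg h1, if_neg h1'] at hge
          rcases lt_trichotomy (a y) (b y) with h' | h' | h'
          · simp only [if_pos h'] at hge
            omega
          · exact h'
          · simp only [if_neg (by omega : ¬ a y < b y), if_pos h'] at hge
            omega
        rw [hinner] at hie
        simp only [if_neg h1, if_neg h1', if_neg (by omega : ¬ a y < b y),
          if_neg (by omega : ¬ b y < a y)] at hie
        exact hcold1 x (Finset.mem_filter.2 ⟨hx, hdx⟩)
          y (Finset.mem_filter.2 ⟨hy, h2⟩) hadj hie
  · intro x hx
    have h1 := hinner_lt x hx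
    have h2 : g x ≤ 2 := by
      have he : g x = if a x < b x then 0 else if b x < a x then 1 else 2 := rfl
      rw [he]
      by_cases h : a x < b x
      · simp [h]
      · by_cases h' : b x < a x <;> simp [h, h']
    have h4 : 3 * Λ^2 * Bk^2 = 3 * (Λ^2 * Bk^2) := by ring
    have h5 : g x * (Λ ^ 2 * Bk ^ 2) ≤ 2 * (Λ ^ 2 * Bk ^ 2) :=
      Nat.mul_le_mul_right _ h2
    show g x * (Λ ^ 2 * Bk ^ 2) + inner x < 3 * Λ ^ 2 * Bk ^ 2
    rw [h4]
    omega

/-! ### The core theorem -/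

theorem core (s Λ : ℕ) (hs : 0 < s) : ∀ k, CoreStmt s Λ k := by
  intro k
  induction k with
  | zero => exact core_zero s Λ hs
  | succ k IHk =>
    intro V _ G l U W o ν A hA hex hfree
    have hBnd : Bnd s Λ (k+1) = 3 * Λ^2 * (Bnd s Λ k)^2 := rfl
    rcases ho0 : o 0 with _ | _ | _
    · have hex' : ∀ x ∈ A, ∀ y ∈ A, x ≠ y →
          (G.Adj x y ↔ (U 0 x < W 0 y ∧
              Rel (fun i => U i.succ) (fun i => W i.succ) (fun i => o i.succ) ν x y) ∨
            (U 0 y < W 0 x ∧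
              Rel (fun i => U i.succ) (fun i => W i.succ) (fun i => o i.succ) ν y x)) := by
        intro x hx y hy hxy
        rw [hex x hx y hy hxy, Rel_succ, Rel_succ, ho0]
        simp only [cmpRel]
      obtain ⟨col, h1, h2⟩ := step_lt s Λ k hs IHk V G l (U 0) (W 0)
        (fun i => U i.succ) (fun i => W i.succ) (fun i => o i.succ) ν A hA hex' hfree
      exact ⟨col, h1, fun x hx => by rw [hBnd]; exact h2 x hx⟩
    · have hex' : ∀ x ∈ A, ∀ y ∈ A, x ≠ y →
          (G.Adj x y ↔ (U 0 x = W 0 y ∧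
              Rel (fun i => U i.succ) (fun i => W i.succ) (fun i => o i.succ) ν x y) ∨
            (U 0 y = W 0 x ∧
              Rel (fun i => U i.succ) (fun i => W i.succ) (fun i => o i.succ) ν y x)) := by
        intro x hx y hy hxy
        rw [hex x hx y hy hxy, Rel_succ, Rel_succ, ho0]
        simp only [cmpRel]
      obtain ⟨col, h1, h2⟩ := step_eq s Λ k hs IHk V G l (U 0) (W 0)
        (fun i => U i.succ) (fun i => W i.succ) (fun i => o i.succ) ν A hA hex' hfree
      exact ⟨col, h1, fun x hx => by rw [hBnd]; exact h2 x hx⟩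
    · have hex' : ∀ x ∈ A, ∀ y ∈ A, x ≠ y →
          (G.Adj x y ↔ ((fun z => -(U 0 z)) x < (fun z => -(W 0 z)) y ∧
              Rel (fun i => U i.succ) (fun i => W i.succ) (fun i => o i.succ) ν x y) ∨
            ((fun z => -(U 0 z)) y < (fun z => -(W 0 z)) x ∧
              Rel (fun i => U i.succ) (fun i => W i.succ) (fun i => o i.succ) ν y x)) := by
        intro x hx y hy hxy
        rw [hex x hx y hy hxy, Rel_succ, Rel_succ, ho0]
        simp only [cmpRel, neg_lt_neg_iff]
      obtain ⟨col, h1, h2⟩ := step_lt s Λ k hs IHk V G l (fun z => -(U 0 z)) (fun z => -(W 0 z))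
        (fun i => U i.succ) (fun i => W i.succ) (fun i => o i.succ) ν A hA hex' hfree
      exact ⟨col, h1, fun x hx => by rw [hBnd]; exact h2 x hx⟩


/-! ### Closed form for the bound -/

lemma Bnd_le (s Λ : ℕ) (hs : 1 ≤ s) (hΛ : 1 ≤ Λ) (k : ℕ) :
    Bnd s Λ k ≤ (3 * Λ^2 * s)^(2^(k+1) - 1) := by
  have hΛ2 : 1 ≤ Λ^2 := Nat.one_le_pow _ _ (by omega)
  have h3Λ : 1 ≤ 3 * Λ^2 := by omega
  induction k with
  | zero =>
    have h2 : Bnd s Λ 0 = s := rfl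
    have h1 : (2:ℕ)^(0+1) - 1 = 1 := rfl
    rw [h2, h1, pow_one]
    calc s = 1 * s := (one_mul s).symm
    _ ≤ (3*Λ^2) * s := Nat.mul_le_mul_right s h3Λ
  | succ k IHk =>
    have h2 : Bnd s Λ (k+1) = 3 * Λ^2 * (Bnd s Λ k)^2 := rfl
    rw [h2]
    have h3 : (Bnd s Λ k)^2 ≤ ((3*Λ^2*s)^(2^(k+1)-1))^2 := Nat.pow_le_pow_left IHk 2
    have h4 : ((3*Λ^2*s)^(2^(k+1)-1))^2 = (3*Λ^2*s)^(2*(2^(k+1)-1)) := by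
      rw [← pow_mul]
      ring_nf
    have h5 : 3 * Λ^2 * (Bnd s Λ k)^2 ≤ (3*Λ^2*s) * (3*Λ^2*s)^(2*(2^(k+1)-1)) := by
      apply Nat.mul_le_mul ?_ (le_trans h3 (le_of_eq h4))
      exact Nat.le_mul_of_pos_right _ (by omega)
    have h6 : (3*Λ^2*s) * (3*Λ^2*s)^(2*(2^(k+1)-1)) = (3*Λ^2*s)^(2*(2^(k+1)-1)+1) :=
      (pow_succ' _ _).symm
    have h7 : 2*(2^(k+1)-1)+1 = 2^(k+1+1) - 1 := by
      have he : (2:ℕ)^(k+1+1) = 2 * 2^(k+1) := by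
        rw [pow_succ]
        ring
      have h8 : 1 ≤ (2:ℕ)^(k+1) := Nat.one_le_pow _ _ (by omega)
      omega
    rw [h7] at h6
    exact le_trans h5 (le_of_eq h6)

lemma compare_iff_cmpRel {a b : ℝ} (o : Ordering) : compare a b = o ↔ cmpRel o a b := by
  cases o
  · exact compare_lt_iff_lt
  · exact compare_eq_iff_eq
  · rw [compare_gt_iff_gt]
    exact Iff.rfl

lemma cmp_le_iff {u w : ℝ} : u ≤ w ↔ ¬ compare u w = Ordering.gt := by
  rw [compare_gt_iff_gt]
  exact not_lt.symm

end SemiLinAux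


open SemiLinAux in
/-- For every positive integer `t` there are constants `α, β, γ > 0` such that every semilinear
graph of complexity `t` on `n ≥ 2` vertices with no clique of size `s` has chromatic number at
most `α·s^β·(log₂ n)^γ`. -/
theorem stmt3 (t : ℕ) (ht : 0 < t) :
    ∃ α β γ : ℝ, 0 < α ∧ 0 < β ∧ 0 < γ ∧
      ∀ (s n : ℕ), 0 < s → 2 ≤ n →
        ∀ (V : Type) [Fintype V] (G : SimpleGraph V),
          Fintype.card V = n → IsSemilinear G t → G.CliqueFree s →
          ∃ m : ℕ, G.chromaticNumber ≤ (m : ℕ∞) ∧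
            (m : ℝ) ≤ α * (s : ℝ) ^ β * (Real.logb 2 n) ^ γ := by
  classical
  set M : ℕ := 2^(t+1) * 3^t with hM
  have hMpos : 0 < M := by positivity
  refine ⟨(27:ℝ)^M, (M : ℝ), ((2*M : ℕ) : ℝ), by positivity,
    by exact_mod_cast hMpos, by exact_mod_cast (by omega : 0 < 2*M), ?_⟩
  intro s n hs hn V instV G hcard hsem hfree
  obtain ⟨d, hd, v, hv, f, hf, φ, hφ⟩ := hsem
  choose aa bb cc hlin using hf
  set Λ : ℕ := Nat.log 2 n + 2 with hΛdef
  have hlogpos : 0 < Nat.log 2 n := Nat.log_pos (by norm_num) hn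
  have hΛ1 : 1 ≤ Λ := by omega
  set U : Fin t → V → ℝ := fun i x => ∑ j, aa i j * v x j with hU
  set Wf : Fin t → V → ℝ := fun i y => -(cc i) - ∑ j, bb i j * v y j with hWf
  have hUW : ∀ i x y, f i (v x) (v y) = U i x - Wf i y := by
    intro i x y
    rw [hlin i (v x) (v y)]
    show _ = (∑ j, aa i j * v x j) - (-(cc i) - ∑ j, bb i j * v y j)
    ring
  have hlt : ∀ i x y, (f i (v x) (v y) < 0 ↔ U i x < Wf i y) := by
    intro i x y
    rw [hUW i x y]
    exact sub_neg
  have hle' : ∀ i x y, (f i (v x) (v y) ≤ 0 ↔ U i x ≤ Wf i y) := by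
    intro i x y
    rw [hUW i x y]
    exact sub_nonpos
  have heq' : ∀ i x y, (f i (v x) (v y) = 0 ↔ U i x = Wf i y) := by
    intro i x y
    rw [hUW i x y]
    exact sub_eq_zero
  set patt : V → V → (Fin t → Ordering) := fun x y i => compare (U i x) (Wf i y) with hpatt
  have htransport : ∀ x y x' y', x ≠ y → x' ≠ y' → patt x y = patt x' y' →
      (G.Adj x y ↔ G.Adj x' y') := by
    intro x y x' y' hxy hxy' hp
    rw [hφ x y hxy, hφ x' y' hxy']
    have hfun : (fun i => (f i (v x) (v y) < 0, f i (v x) (v y) ≤ 0, f i (v x) (v y) = 0))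
        = (fun i => (f i (v x') (v y') < 0, f i (v x') (v y') ≤ 0, f i (v x') (v y') = 0)) := by
      funext i
      have hpi : compare (U i x) (Wf i y) = compare (U i x') (Wf i y') := congrFun hp i
      have c1 : (f i (v x) (v y) < 0) = (f i (v x') (v y') < 0) := by
        apply propext
        rw [hlt, hlt, ← compare_lt_iff_lt, ← compare_lt_iff_lt, hpi]
      have c2 : (f i (v x) (v y) ≤ 0) = (f i (v x') (v y') ≤ 0) := by
        apply propext
        rw [hle', hle', cmp_le_iff, cmp_le_iff, hpi]
      have c3 : (f i (v x) (v y) = 0) = (f i (v x') (v y') = 0) := by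
        apply propext
        rw [heq', heq']
        rw [← compare_eq_iff_eq (a := U i x) (b := Wf i y)]
        rw [← compare_eq_iff_eq (a := U i x') (b := Wf i y')]
        rw [hpi]
      rw [c1, c2, c3]
    rw [hfun]
  have hpattIff : ∀ (σ : Fin t → Ordering) x y,
      patt x y = σ ↔ ∀ i, cmpRel (σ i) (U i x) (Wf i y) := by
    intro σ x y
    rw [funext_iff]
    constructor
    · intro h i
      exact (compare_iff_cmpRel (σ i)).1 (h i)
    · intro h i
      exact (compare_iff_cmpRel (σ i)).2 (h i)
  have hσcol : ∀ σ : Fin t → Ordering, ∃ col : V → ℕ,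
      (∀ x y, G.Adj x y → patt x y = σ → col x ≠ col y) ∧ ∀ x, col x < Bnd s Λ t := by
    intro σ
    by_cases hall : ∀ x y, x ≠ y → patt x y = σ → G.Adj x y
    · let Gσ : SimpleGraph V :=
        ⟨fun x y => G.Adj x y ∧ (patt x y = σ ∨ patt y x = σ),
         ⟨fun x y h => ⟨h.1.symm, h.2.symm⟩⟩,
         ⟨fun x h => G.loopless.irrefl x h.1⟩⟩
      have hfreeσ : Gσ.CliqueFree s :=
        SimpleGraph.CliqueFree.anti (fun x y h => h.1) hfree
      have hA : 2 * (Finset.univ : Finset V).card < 2 ^ Λ := by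
        have h1 : n < 2^(Nat.log 2 n + 1) := Nat.lt_pow_succ_log_self (by norm_num) n
        have h2 : (2:ℕ)^Λ = 2^(Nat.log 2 n + 1) * 2 := by
          rw [hΛdef]
          rw [pow_succ]
        rw [Finset.card_univ, hcard]
        omega
      have hexσ : ∀ x ∈ (Finset.univ : Finset V), ∀ y ∈ (Finset.univ : Finset V), x ≠ y →
          (Gσ.Adj x y ↔ Rel U Wf σ (fun i : Fin 0 => i.elim0) x y ∨
            Rel U Wf σ (fun i : Fin 0 => i.elim0) y x) := by
        intro x _ y _ hxy
        have hGσ : Gσ.Adj x y ↔ (G.Adj x y ∧ (patt x y = σ ∨ patt y x = σ)) := Iff.rfl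
        rw [hGσ]
        constructor
        · rintro ⟨-, h | h⟩
          · exact Or.inl ⟨(hpattIff σ x y).1 h, fun i => i.elim0⟩
          · exact Or.inr ⟨(hpattIff σ y x).1 h, fun i => i.elim0⟩
        · rintro (⟨h1, -⟩ | ⟨h1, -⟩)
          · have hp : patt x y = σ := (hpattIff σ x y).2 h1
            exact ⟨hall x y hxy hp, Or.inl hp⟩
          · have hp : patt y x = σ := (hpattIff σ y x).2 h1
            exact ⟨(hall y x hxy.symm hp).symm, Or.inr hp⟩
      obtain ⟨col, hc1, hc2⟩ := core s Λ hs t V Gσ 0 U Wf σ (fun i : Fin 0 => i.elim0)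
        Finset.univ hA hexσ hfreeσ
      refine ⟨col, ?_, fun x => hc2 x (Finset.mem_univ x)⟩
      intro x y hadj hp
      exact hc1 x (Finset.mem_univ x) y (Finset.mem_univ y) ⟨hadj, Or.inl hp⟩
    · push_neg at hall
      obtain ⟨x0, y0, hne0, hp0, hnadj⟩ := hall
      refine ⟨fun _ => 0, ?_, fun x => Bnd_pos hs (by omega) t⟩
      intro x y hadj hp
      exact absurd ((htransport x y x0 y0 hadj.ne hne0 (hp.trans hp0.symm)).1 hadj) hnadj
  choose colσ hcolσ1 hcolσ2 using hσcol
  set m : ℕ := (Bnd s Λ t)^(3^t) with hm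
  have hcoloring : G.Coloring ((Fin t → Ordering) → Fin (Bnd s Λ t)) := by
    apply SimpleGraph.Coloring.mk (fun x σ => ⟨colσ σ x, hcolσ2 σ x⟩)
    intro x y hadj he
    have h1 := congrFun he (patt x y)
    rw [Fin.mk.injEq] at h1
    exact hcolσ1 (patt x y) x y hadj rfl h1
  have hcolorable : G.Colorable m := by
    have h1 := hcoloring.colorable
    rwa [Fintype.card_fun, Fintype.card_fin, Fintype.card_fun, card_ordering,
      Fintype.card_fin] at h1
  refine ⟨m, hcolorable.chromaticNumber_le, ?_⟩
  -- numerics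
  have hcastlog : (Nat.log 2 n : ℝ) ≤ Real.logb 2 n := by
    have h1 : (2:ℝ)^(Nat.log 2 n) ≤ (n:ℝ) := by
      exact_mod_cast Nat.pow_log_le_self 2 (by omega)
    have h2 := Real.logb_le_logb_of_le (by norm_num : (1:ℝ) < 2) (by positivity) h1
    rwa [Real.logb_pow, Real.logb_self_eq_one (by norm_num), mul_one] at h2
  have hlogb1 : 1 ≤ Real.logb 2 n := by
    have : (1:ℝ) ≤ (Nat.log 2 n : ℝ) := by exact_mod_cast hlogpos
    linarith
  have hΛle : (Λ:ℝ) ≤ 3 * Real.logb 2 n := by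
    have h1 : Λ ≤ 3 * Nat.log 2 n := by omega
    have h2 : (Λ:ℝ) ≤ ((3 * Nat.log 2 n : ℕ) : ℝ) := by exact_mod_cast h1
    have h3 : ((3 * Nat.log 2 n : ℕ) : ℝ) = 3 * (Nat.log 2 n : ℝ) := by push_cast; ring
    linarith
  set Q : ℕ := 3 * Λ^2 * s with hQ
  have hQ1 : 1 ≤ Q := by
    have h1 : 1 ≤ Λ^2 := Nat.one_le_pow _ _ (by omega)
    have h2 : 1*1*1 ≤ 3*Λ^2*s := Nat.mul_le_mul (Nat.mul_le_mul (by omega) h1) hs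
    omega
  have hmQ : m ≤ Q^M := by
    have h1 : Bnd s Λ t ≤ Q^(2^(t+1)-1) := Bnd_le s Λ hs hΛ1 t
    have h2 : m ≤ (Q^(2^(t+1)-1))^(3^t) := Nat.pow_le_pow_left h1 _
    have h3 : (Q^(2^(t+1)-1))^(3^t) = Q^((2^(t+1)-1) * 3^t) := (pow_mul _ _ _).symm
    have h4 : (2^(t+1)-1) * 3^t ≤ M := by
      rw [hM]
      have h5 : (2:ℕ)^(t+1)-1 ≤ 2^(t+1) := Nat.sub_le _ _
      exact Nat.mul_le_mul_right _ h5
    exact le_trans h2 (le_trans (le_of_eq h3) (Nat.pow_le_pow_right hQ1 h4))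
  have hs0 : (0:ℝ) ≤ (s:ℝ) := Nat.cast_nonneg s
  have hQle : (Q:ℝ) ≤ 27 * s * (Real.logb 2 n)^2 := by
    have h1 : (Q:ℝ) = 3 * (Λ:ℝ)^2 * (s:ℝ) := by
      rw [hQ]
      push_cast
      ring
    have h2 : (Λ:ℝ)^2 ≤ (3 * Real.logb 2 n)^2 := by
      apply pow_le_pow_left₀ (by positivity) hΛle
    have h4 : 3 * (Λ:ℝ)^2 ≤ 3 * (3 * Real.logb 2 n)^2 := by linarith
    have h5 := mul_le_mul_of_nonneg_right h4 hs0
    calc (Q:ℝ) = 3*(Λ:ℝ)^2 * s := h1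
    _ ≤ 3*(3*Real.logb 2 n)^2 * s := h5
    _ = 27 * s * (Real.logb 2 n)^2 := by ring
  have final : (m:ℝ) ≤ 27^M * (s:ℝ)^M * (Real.logb 2 n)^(2*M) := by
    have h1 : (m:ℝ) ≤ ((Q:ℝ))^M := by exact_mod_cast hmQ
    have h2 : ((Q:ℝ))^M ≤ (27 * s * (Real.logb 2 n)^2)^M := by
      apply pow_le_pow_left₀ (by positivity) hQle
    have h3 : (27 * (s:ℝ) * (Real.logb 2 n)^2)^M
        = 27^M * (s:ℝ)^M * ((Real.logb 2 n)^2)^M := by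
      rw [mul_pow, mul_pow]
    have h4 : ((Real.logb 2 n)^2)^M = (Real.logb 2 n)^(2*M) := by rw [← pow_mul]
    calc (m:ℝ) ≤ ((Q:ℝ))^M := h1
    _ ≤ (27 * s * (Real.logb 2 n)^2)^M := h2
    _ = 27^M * (s:ℝ)^M * (Real.logb 2 n)^(2*M) := by rw [h3, h4]
  have e1 : (s:ℝ)^((M:ℕ):ℝ) = (s:ℝ)^M := Real.rpow_natCast _ M
  have e2 : (Real.logb 2 n)^(((2*M : ℕ)):ℝ) = (Real.logb 2 n)^(2*M) := Real.rpow_natCast _ _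
  rw [e1, e2]
  exact final
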